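/- Let θ be an antiunitary operator on ℂ^N with θ² = -1, and let P be an orthogonal projector on ℂ^N satisfying θPθ⁻¹ = P. Then the rank of P is even. -/

import Mathlib

/-- Let `θ` be an antiunitary operator on `ℂ^N` with `θ² = -1`, and let
`P` be an orthogonal projector on `ℂ^N` commuting with `θ` (i.e. `θ P θ⁻¹ = P`).
Then the rank of `P` is even. -/
theorem rank_even_of_time_reversal_invariant_projector
    (N : ℕ)
    (θ : EuclideanSpace ℂ (Fin N) ≃ₛₗ[starRingEnd ℂ] EuclideanSpace ℂ (Fin N))
    (hθ : ∀ φ ψ : EuclideanSpace ℂ (Fin N), (inner ℂ (θ φ) (θ ψ) : ℂ) = inner ℂ ψ φ)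
    (hθ2 : ∀ φ : EuclideanSpace ℂ (Fin N), θ (θ φ) = -φ)
    (P : EuclideanSpace ℂ (Fin N) →ₗ[ℂ] EuclideanSpace ℂ (Fin N))
    (hproj : P ∘ₗ P = P)
    (hsa : ∀ φ ψ : EuclideanSpace ℂ (Fin N), (inner ℂ (P φ) ψ : ℂ) = inner ℂ φ (P ψ))
    (hTRS : ∀ φ : EuclideanSpace ℂ (Fin N), θ (P φ) = P (θ φ)) :
    Even (Module.finrank ℂ (LinearMap.range P)) := by
  classical
  set E := EuclideanSpace ℂ (Fin N)
  set V : Submodule ℂ E := LinearMap.range P with hV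
  -- range is invariant under θ
  have hinv : ∀ x ∈ V, θ x ∈ V := by
    rintro x ⟨y, rfl⟩
    exact ⟨θ y, (hTRS y).symm⟩
  set n := Module.finrank ℂ V with hn
  have b : Module.Basis (Fin n) ℂ V := Module.finBasis ℂ V
  -- the symplectic matrix
  set M : Matrix (Fin n) (Fin n) ℂ :=
    fun i j => (inner ℂ (θ (b i : E)) ((b j : E)) : ℂ) with hM
  -- antisymmetry
  have hskew : ∀ x y : E, (inner ℂ (θ x) y : ℂ) = - inner ℂ (θ y) x := by
    intro x y
    have h := hθ y (θ x)
    rw [hθ2 x] at h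
    rw [← h]
    simp
  have hMT : M.transpose = -M := by
    ext i j
    simp only [Matrix.transpose_apply, Matrix.neg_apply, hM]
    exact hskew (b j : E) (b i : E)
  -- pairing of a vector with the matrix
  have hpair : ∀ (v : Fin n → ℂ) (j : Fin n),
      (Matrix.vecMul v M) j = inner ℂ (θ ((∑ i, v i • b i : V) : E)) ((b j : E)) := by
    intro v j
    have : ((∑ i, v i • b i : V) : E) = ∑ i, v i • (b i : E) := by
      simp
    rw [this]
    rw [map_sum]
    rw [sum_inner]
    simp only [Matrix.vecMul, dotProduct]
    congr 1
    ext i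
    rw [LinearEquiv.map_smulₛₗ]
    rw [inner_smul_left]
    simp [hM, mul_comm]
  -- nondegeneracy: det M ≠ 0
  have hdet : M.det ≠ 0 := by
    intro h0
    obtain ⟨v, hv, hvM⟩ := Matrix.exists_vecMul_eq_zero_iff.mpr h0
    apply hv
    set ξ : V := ∑ i, v i • b i with hξ
    have hθξV : θ (ξ : E) ∈ V := hinv _ ξ.2
    have horth : ∀ y ∈ V, (inner ℂ (θ (ξ : E)) y : ℂ) = 0 := by
      intro y hy
      have hy' : y = ∑ j, (b.repr ⟨y, hy⟩) j • (b j : E) := by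
        have := b.sum_repr ⟨y, hy⟩
        calc y = ((⟨y, hy⟩ : V) : E) := rfl
          _ = ((∑ j, (b.repr ⟨y, hy⟩) j • b j : V) : E) := by rw [this]
          _ = ∑ j, (b.repr ⟨y, hy⟩) j • (b j : E) := by simp only [Submodule.coe_sum, Submodule.coe_smul]
      rw [hy', inner_sum]
      refine Finset.sum_eq_zero fun j _ => ?_
      rw [inner_smul_right]
      have : (inner ℂ (θ (ξ : E)) ((b j : E)) : ℂ) = 0 := by
        rw [← hpair v j, hvM]; rfl
      rw [this, mul_zero]
    have hθξ0 : θ (ξ : E) = 0 := by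
      have := horth _ hθξV
      exact inner_self_eq_zero.mp this
    have hξ0 : (ξ : E) = 0 := by
      have h00 : θ ((ξ : E)) = θ 0 := by rw [hθξ0, map_zero]
      exact θ.injective h00
    have hξ0' : ξ = 0 := Subtype.ext hξ0
    have : b.repr ξ = Finsupp.equivFunOnFinite.symm v := by
      rw [hξ]
      ext i
      rw [b.repr_sum_self]
      rfl
    rw [hξ0', map_zero] at this
    ext i
    have := congrFun (congrArg (⇑) this.symm) i
    simpa using this
  -- skew-symmetry forces even dimension
  have hd : M.det = (-1 : ℂ) ^ n * M.det := by
    conv_lhs => rw [← Matrix.det_transpose, hMT]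
    rw [Matrix.det_neg]
    simp
  have : ((-1 : ℂ)) ^ n = 1 := by
    have h1 : (1 : ℂ) * M.det = ((-1 : ℂ) ^ n) * M.det := by rw [one_mul, ← hd]
    exact (mul_right_cancel₀ hdet h1).symm
  exact (neg_one_pow_eq_one_iff_even (by norm_num : (-1 : ℂ) ≠ 1)).mp this
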